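/- Let κ ≠ 1, β ≠ 0, λ > 0 with λ ≠ β. For the function c(t) = (1/β + (1/λ - 1/β)·exp(-(κ-1)βt))⁻¹, on any interval [0,T] where c is defined, the integral satisfies (κ-1)·∫₀ᵗ c(s) ds = log(1 + (λ/β)(exp((κ-1)βt) - 1)). -/

import Mathlib

theorem stmt7 (lam β κ : ℝ) (hκ : κ ≠ 1) (hβ : β ≠ 0) (hlam : 0 < lam) (hne : lam ≠ β)
    (c : ℝ → ℝ)
    (hc : c = fun t => (1/β + (1/lam - 1/β) * Real.exp (-(κ-1)*β*t))⁻¹) :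
    ∀ t : ℝ, 0 ≤ t →
      (∀ s ∈ Set.Icc (0:ℝ) t, 1/β + (1/lam - 1/β) * Real.exp (-(κ-1)*β*s) ≠ 0) →
      (κ-1) * ∫ s in (0:ℝ)..t, c s
        = Real.log (1 + (lam/β) * (Real.exp ((κ-1)*β*t) - 1)) := by
  intro t ht hD
  have hlam0 : lam ≠ 0 := ne_of_gt hlam
  set a : ℝ := κ - 1 with ha
  have haz : a ≠ 0 := sub_ne_zero.mpr hκ
  have key : ∀ s : ℝ,
      1 + (lam/β) * (Real.exp (a*β*s) - 1)
        = lam * Real.exp (a*β*s) * (1/β + (1/lam - 1/β) * Real.exp (-a*β*s)) := by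
    intro s
    have hinv : Real.exp (-a*β*s) = (Real.exp (a*β*s))⁻¹ := by
      rw [← Real.exp_neg]; ring_nf
    rw [hinv]
    have hexp := Real.exp_ne_zero (a*β*s)
    field_simp
    ring
  have hgne : ∀ s ∈ Set.Icc (0:ℝ) t, 1 + (lam/β) * (Real.exp (a*β*s) - 1) ≠ 0 := by
    intro s hs
    rw [key s]
    exact mul_ne_zero (mul_ne_zero hlam0 (Real.exp_ne_zero _)) (hD s hs)
  set F : ℝ → ℝ := fun s => Real.log (1 + (lam/β) * (Real.exp (a*β*s) - 1)) with hF
  have cancel : ∀ x y z : ℝ, x ≠ 0 → z * x⁻¹ * (y * x) = z * y := by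
    intro x y z hx
    field_simp
  have hderiv : ∀ s ∈ Set.uIcc (0:ℝ) t, HasDerivAt F (a * c s) s := by
    intro s hs
    rw [Set.uIcc_of_le ht] at hs
    have h1 : HasDerivAt (fun x : ℝ => a*β*x) (a*β) s := by
      simpa using (hasDerivAt_id s).const_mul (a*β)
    have h2 := h1.exp
    have h3 := ((h2.sub_const 1).const_mul (lam/β)).const_add 1
    have h4 := h3.log (hgne s hs)
    convert h4 using 1
    have hDs := hD s hs
    have hle : lam * Real.exp (a*β*s) ≠ 0 := mul_ne_zero hlam0 (Real.exp_ne_zero _)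
    rw [hc]
    simp only [key s]
    rw [eq_div_iff (mul_ne_zero hle hDs)]
    rw [cancel _ _ _ hDs]
    field_simp
  have hcont : ContinuousOn (fun s => a * c s) (Set.uIcc (0:ℝ) t) := by
    rw [hc]
    refine ContinuousOn.const_smul ?_ a
    refine ContinuousOn.inv₀ (Continuous.continuousOn (by continuity)) ?_
    intro s hs
    rw [Set.uIcc_of_le ht] at hs
    exact hD s hs
  have hint : IntervalIntegrable (fun s => a * c s) MeasureTheory.volume 0 t :=
    hcont.intervalIntegrable
  have := intervalIntegral.integral_eq_sub_of_hasDerivAt hderiv hint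
  rw [intervalIntegral.integral_const_mul] at this
  have hF0 : F 0 = 0 := by simp [hF]
  rw [hF0, sub_zero] at this
  simp only [hF] at this
  exact this
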